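/- Let d be a positive integer and t a non-negative integer. If S is a set of d + t + 2 points in ℝ^d and T_2(S) has covering dimension at most 0, then S admits a Tverberg (2+t)-partition, i.e., T_{2+t}(S) is non-empty. -/

import Mathlib

set_option maxHeartbeats 1000000
set_option synthInstance.maxHeartbeats 1000000
set_option linter.unusedSectionVars false
set_option linter.unusedVariables false
set_option linter.unnecessarySimpa false
set_option linter.deprecated false


/-- The Tverberg set `T_r(S)` of a finite point set `S`: points `p` admitting a
partition of `S` into `r` pairwise disjoint parts whose convex hulls all contain `p`. -/
def TverSet {E : Type*} [AddCommGroup E] [Module ℝ E] (r : ℕ) (S : Finset E) : Set E :=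
  {p | ∃ A : Fin r → Finset E,
    (∀ i j, i ≠ j → Disjoint (A i) (A j)) ∧
    (⋃ i, (A i : Set E)) = (S : Set E) ∧
    ∀ i, p ∈ convexHull ℝ (A i : Set E)}

/-- `X` has covering dimension at most `k`: every finite open cover admits a finite
open refinement in which any `k + 2` distinct members have empty intersection. -/
def CovDimLE (X : Type*) [TopologicalSpace X] (k : ℕ) : Prop :=
  ∀ 𝒰 : Finset (Set X), (∀ U ∈ 𝒰, IsOpen U) → ⋃₀ (𝒰 : Set (Set X)) = Set.univ →
    ∃ 𝒱 : Finset (Set X), (∀ V ∈ 𝒱, IsOpen V) ∧ ⋃₀ (𝒱 : Set (Set X)) = Set.univ ∧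
      (∀ V ∈ 𝒱, ∃ U ∈ 𝒰, V ⊆ U) ∧
      ∀ 𝒮 : Finset (Set X), 𝒮 ⊆ 𝒱 → k + 2 ≤ 𝒮.card → ⋂₀ (𝒮 : Set (Set X)) = ∅

open Finset Module

attribute [local instance 5] Classical.propDecidable

-- genericity: avoid finitely many nonzero functionals, within a submodule
lemma exists_forall_ne_zero {M : Type*} [AddCommGroup M] [Module ℝ M]
    {J : Type*} (s : Finset J) (χ : J → (M →ₗ[ℝ] ℝ)) (D : Submodule ℝ M)
    (h : ∀ j ∈ s, ∃ μ ∈ D, χ j μ ≠ 0) :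
    ∃ μ ∈ D, ∀ j ∈ s, χ j μ ≠ 0 := by
  classical
  induction s using Finset.induction_on with
  | empty => exact ⟨0, D.zero_mem, by simp⟩
  | @insert a s ha ih =>
    obtain ⟨μ, hμD, hμ⟩ := ih (fun j hj => h j (Finset.mem_insert_of_mem hj))
    obtain ⟨ν, hνD, hν⟩ := h a (Finset.mem_insert_self a s)
    -- bad values of c
    set B : Finset ℝ := (insert a s).image
      (fun j => if χ j ν = 0 then 0 else -(χ j μ) / (χ j ν)) with hB
    obtain ⟨c, hc⟩ := Infinite.exists_notMem_finset (insert 0 B)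
    refine ⟨μ + c • ν, D.add_mem hμD (D.smul_mem _ hνD), ?_⟩
    intro j hj
    have hc0 : c ≠ 0 := fun h => hc (h ▸ Finset.mem_insert_self 0 B)
    have hcB : c ∉ B := fun h => hc (Finset.mem_insert_of_mem h)
    simp only [map_add, map_smul, smul_eq_mul]
    rcases eq_or_ne (χ j ν) 0 with h1 | h1
    · rw [h1, mul_zero, add_zero]
      rcases Finset.mem_insert.mp hj with rfl | hj'
      · exact absurd h1 hν
      · exact hμ j hj'
    · intro hcon
      apply hcB
      rw [hB]
      refine Finset.mem_image.mpr ⟨j, hj, ?_⟩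
      rw [if_neg h1]
      field_simp
      linarith [hcon]

-- a nonzero element of D with zero sum has a positive and a negative coordinate
lemma exists_pos_coord {ι : Type*} [Fintype ι] {μ : ι → ℝ}
    (hsum : ∑ i, μ i = 0) (hne : μ ≠ 0) : ∃ i, 0 < μ i := by
  by_contra h
  push_neg at h
  apply hne
  funext i
  have := (Finset.sum_eq_zero_iff_of_nonpos (fun i _ => h i)).mp hsum i (Finset.mem_univ i)
  exact this

variable {ι : Type} [Fintype ι] {E : Type} [AddCommGroup E] [Module ℝ E]

/-- the class of `i0` in `supp lam0` under the relation "proportional coordinates on `D`" -/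
noncomputable def Tcl (D : Submodule ℝ (ι → ℝ)) (lam0 : ι → ℝ) (i0 : ι) : Finset ι :=
  Finset.univ.filter (fun i => lam0 i ≠ 0 ∧ ∀ μ ∈ D, μ i0 * lam0 i = μ i * lam0 i0)

lemma mem_Tcl {D : Submodule ℝ (ι → ℝ)} {lam0 : ι → ℝ} {i0 i : ι} :
    i ∈ Tcl D lam0 i0 ↔ lam0 i ≠ 0 ∧ ∀ μ ∈ D, μ i0 * lam0 i = μ i * lam0 i0 := by
  unfold Tcl
  rw [Finset.mem_filter]
  simp only [Finset.mem_univ, true_and]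

lemma self_mem_Tcl {D : Submodule ℝ (ι → ℝ)} {lam0 : ι → ℝ} {i0 : ι} (h : lam0 i0 ≠ 0) :
    i0 ∈ Tcl D lam0 i0 := mem_Tcl.mpr ⟨h, fun _ _ => rfl⟩

/-- Key combinatorial fact (K1): the sum of `|lam0 i| • v i` over a class vanishes. -/
lemma class_sum (v : ι → E) (D : Submodule ℝ (ι → ℝ))
    (hF : ∀ μ ∈ D, ∑ i, max (μ i) 0 • v i = 0)
    {lam0 : ι → ℝ} (hmem : lam0 ∈ D) {i0 : ι} (h0 : lam0 i0 ≠ 0) :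
    ∑ i ∈ Tcl D lam0 i0, |lam0 i| • v i = 0 := by
  -- generic separating element
  set s : Finset ι := Finset.univ.filter (fun i => lam0 i ≠ 0 ∧ i ∉ Tcl D lam0 i0) with hs
  set χ : ι → ((ι → ℝ) →ₗ[ℝ] ℝ) :=
    fun i => lam0 i • (LinearMap.proj (R := ℝ) (φ := fun _ : ι => ℝ) i0)
      - lam0 i0 • (LinearMap.proj (R := ℝ) (φ := fun _ : ι => ℝ) i) with hχ
  have hχapp : ∀ i μ, χ i μ = μ i0 * lam0 i - μ i * lam0 i0 := by
    intro i μ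
    simp [hχ, LinearMap.proj, mul_comm]
  obtain ⟨μs, hμsD, hμs⟩ := exists_forall_ne_zero s χ D (by
    intro i hi
    rw [hs] at hi
    obtain ⟨hne, hnotcl⟩ := (Finset.mem_filter.mp hi).2
    rw [mem_Tcl] at hnotcl
    push_neg at hnotcl
    obtain ⟨μ, hμ, hne2⟩ := hnotcl hne
    exact ⟨μ, hμ, by rw [hχapp]; exact sub_ne_zero_of_ne hne2⟩)
  -- ν vanishes exactly on the class (within supp lam0)
  set ν : ι → ℝ := μs - (μs i0 / lam0 i0) • lam0 with hν
  have hνD : ν ∈ D := D.sub_mem hμsD (D.smul_mem _ hmem)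
  have hνapp : ∀ i, ν i = μs i - (μs i0 / lam0 i0) * lam0 i := fun i => rfl
  have hν_zero : ∀ i, i ∈ Tcl D lam0 i0 → ν i = 0 := by
    intro i hi
    obtain ⟨hne, hrel⟩ := mem_Tcl.mp hi
    have := hrel μs hμsD
    rw [hνapp]
    field_simp
    linarith [this]
  have hν_ne : ∀ i, lam0 i ≠ 0 → i ∉ Tcl D lam0 i0 → ν i ≠ 0 := by
    intro i hne hni
    have hisa : i ∈ s := by rw [hs]; simp [hne, hni]
    have := hμs i hisa
    rw [hχapp] at this
    rw [hνapp]
    intro hcon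
    apply this
    have h' : μs i = (μs i0 / lam0 i0) * lam0 i := by linarith [hcon]
    rw [h']
    field_simp
    ring
  -- choose small ε
  have hεex : ∃ ε : ℝ, 0 < ε ∧ ∀ i, ν i ≠ 0 → ε * |lam0 i| < |ν i| := by
    set t : Finset ι := Finset.univ.filter (fun i => ν i ≠ 0) with ht
    rcases t.eq_empty_or_nonempty with h | h
    · refine ⟨1, one_pos, fun i hi => ?_⟩
      have : i ∈ t := Finset.mem_filter.mpr ⟨Finset.mem_univ i, hi⟩
      rw [h] at this
      exact absurd this (Finset.notMem_empty i)
    · set ε := (t.image (fun i => |ν i| / (|lam0 i| + 1))).min' (Finset.image_nonempty.mpr h) with hε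
      have hεpos : 0 < ε := by
        rw [hε]
        apply Finset.lt_min'_iff (α := ℝ) _ _ |>.mpr
        intro y hy
        obtain ⟨i, hi, rfl⟩ := Finset.mem_image.mp hy
        have hνi : ν i ≠ 0 := by rw [ht] at hi; simpa using hi
        positivity
      refine ⟨ε, hεpos, fun i hi => ?_⟩
      have hit : i ∈ t := Finset.mem_filter.mpr ⟨Finset.mem_univ i, hi⟩
      have hle : ε ≤ |ν i| / (|lam0 i| + 1) :=
        Finset.min'_le _ _ (Finset.mem_image_of_mem _ hit)
      have h1 : |lam0 i| < |lam0 i| + 1 := by linarith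
      calc ε * |lam0 i| ≤ (|ν i| / (|lam0 i| + 1)) * |lam0 i| := by
              apply mul_le_mul_of_nonneg_right hle (abs_nonneg _)
        _ < |ν i| := by
              rw [div_mul_eq_mul_div, div_lt_iff₀ (by positivity)]
              have : 0 < |ν i| := abs_pos.mpr hi
              nlinarith [abs_nonneg (lam0 i)]
  obtain ⟨ε, hεpos, hεsmall⟩ := hεex
  -- the second difference identity
  have hplus : (ν + ε • lam0) ∈ D := D.add_mem hνD (D.smul_mem _ hmem)
  have hminus : (ν - ε • lam0) ∈ D := D.sub_mem hνD (D.smul_mem _ hmem)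
  have key : ∑ i, (max ((ν + ε • lam0) i) 0 + max ((ν - ε • lam0) i) 0 - 2 * max (ν i) 0) • v i
      = (0 : E) := by
    have e1 := hF _ hplus
    have e2 := hF _ hminus
    have e3 := hF _ hνD
    have : ∑ i, (max ((ν + ε • lam0) i) 0 + max ((ν - ε • lam0) i) 0 - 2 * max (ν i) 0) • v i
        = (∑ i, max ((ν + ε • lam0) i) 0 • v i) + (∑ i, max ((ν - ε • lam0) i) 0 • v i)
          - (2:ℝ) • (∑ i, max (ν i) 0 • v i) := by
      rw [Finset.smul_sum, ← Finset.sum_add_distrib, ← Finset.sum_sub_distrib]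
      congr 1
      funext i
      module
    rw [this, e1, e2, e3]
    simp
  -- per-coordinate evaluation
  have percoord : ∀ i, (max ((ν + ε • lam0) i) 0 + max ((ν - ε • lam0) i) 0 - 2 * max (ν i) 0)
      = if i ∈ Tcl D lam0 i0 then ε * |lam0 i| else 0 := by
    intro i
    by_cases hcl : i ∈ Tcl D lam0 i0
    · have hz : ν i = 0 := hν_zero i hcl
      simp only [Pi.add_apply, Pi.sub_apply, Pi.smul_apply, smul_eq_mul, hz, zero_add, zero_sub,
        if_pos hcl, max_self, mul_zero, sub_zero]
      rcases le_or_gt 0 (lam0 i) with h | h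
      · rw [max_eq_left (by positivity), max_eq_right (by nlinarith), abs_of_nonneg h]
        ring
      · rw [max_eq_right (by nlinarith), max_eq_left (by nlinarith), abs_of_neg h]
        ring
    · by_cases hli : lam0 i = 0
      · simp [hli, if_neg hcl]
        ring
      · have hνi : ν i ≠ 0 := hν_ne i hli hcl
        have hsm : ε * |lam0 i| < |ν i| := hεsmall i hνi
        simp only [Pi.add_apply, Pi.sub_apply, Pi.smul_apply, smul_eq_mul, if_neg hcl]
        rcases lt_or_gt_of_ne hνi with h | h
        · -- ν i < 0, all three maxes are 0
          have habs : |ν i| = -(ν i) := abs_of_neg h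
          have h1 : ν i + ε * lam0 i < 0 := by
            have : ε * lam0 i ≤ ε * |lam0 i| := by
              have := le_abs_self (lam0 i)
              nlinarith
            nlinarith [hsm, habs]
          have h2 : ν i - ε * lam0 i < 0 := by
            have : -(ε * lam0 i) ≤ ε * |lam0 i| := by
              have := neg_abs_le (lam0 i)
              nlinarith
            nlinarith [hsm, habs]
          rw [max_eq_right h1.le, max_eq_right h2.le, max_eq_right h.le]
          ring
        · have habs : |ν i| = ν i := abs_of_pos h
          have h1 : 0 < ν i + ε * lam0 i := by
            have : -(ε * lam0 i) ≤ ε * |lam0 i| := by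
              have := neg_abs_le (lam0 i); nlinarith
            nlinarith [hsm, habs]
          have h2 : 0 < ν i - ε * lam0 i := by
            have : ε * lam0 i ≤ ε * |lam0 i| := by
              have := le_abs_self (lam0 i); nlinarith
            nlinarith [hsm, habs]
          rw [max_eq_left h1.le, max_eq_left h2.le, max_eq_left h.le]
          ring
  have step : ∑ i, (if i ∈ Tcl D lam0 i0 then (ε * |lam0 i|) • v i else 0) = (0:E) := by
    have heq : ∑ i, (if i ∈ Tcl D lam0 i0 then (ε * |lam0 i|) • v i else 0)
        = ∑ i, (max ((ν + ε • lam0) i) 0 + max ((ν - ε • lam0) i) 0 - 2 * max (ν i) 0) • v i := by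
      apply Finset.sum_congr rfl
      intro i _
      rw [percoord i]
      split_ifs with hcl
      · rfl
      · rw [zero_smul]
    rw [heq, key]
  rw [Finset.sum_ite_mem, Finset.univ_inter] at step
  have h2 : ∑ i ∈ Tcl D lam0 i0, (ε * |lam0 i|) • v i
      = ε • ∑ i ∈ Tcl D lam0 i0, |lam0 i| • v i := by
    rw [Finset.smul_sum]
    apply Finset.sum_congr rfl
    intro i _
    rw [smul_smul]
  rw [h2] at step
  exact (smul_eq_zero.mp step).resolve_left (ne_of_gt hεpos)

/-- distinct nonzero functions with disjoint supports -/
lemma ne_of_disj {w w' : ι → ℝ} (hw : w ≠ 0) (hd : ∀ i, w i = 0 ∨ w' i = 0) : w ≠ w' := by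
  intro h
  subst h
  apply hw
  funext i
  rcases hd i with h | h <;> exact h

/-- two indices in a common class have proportional coordinates -/
lemma class_trans {D : Submodule ℝ (ι → ℝ)} {lam0 : ι → ℝ} {i i' i'' : ι}
    (h1 : i'' ∈ Tcl D lam0 i) (h2 : i'' ∈ Tcl D lam0 i') :
    ∀ μ ∈ D, μ i * lam0 i' = μ i' * lam0 i := by
  intro μ hμ
  obtain ⟨h0'', e1⟩ := mem_Tcl.mp h1
  obtain ⟨-, e2⟩ := mem_Tcl.mp h2
  have key : (μ i * lam0 i') * lam0 i'' = (μ i' * lam0 i) * lam0 i'' := by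
    linear_combination lam0 i' * (e1 μ hμ) - lam0 i * (e2 μ hμ)
  exact mul_right_cancel₀ h0'' key

/-- the weight function attached to a class -/
noncomputable def wcl (D : Submodule ℝ (ι → ℝ)) (lam0 : ι → ℝ) (i0 : ι) : ι → ℝ :=
  fun i => if i ∈ Tcl D lam0 i0 then |lam0 i| else 0

lemma wcl_nonneg (D : Submodule ℝ (ι → ℝ)) (lam0 : ι → ℝ) (i0 i : ι) :
    0 ≤ wcl D lam0 i0 i := by
  unfold wcl; split_ifs; exacts [abs_nonneg _, le_refl 0]

lemma wcl_ne_zero_iff {D : Submodule ℝ (ι → ℝ)} {lam0 : ι → ℝ} {i0 i : ι} :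
    wcl D lam0 i0 i ≠ 0 ↔ i ∈ Tcl D lam0 i0 := by
  unfold wcl
  split_ifs with h
  · simp only [h, iff_true]
    exact abs_ne_zero.mpr (mem_Tcl.mp h).1
  · simp [h]

lemma wcl_sum (v : ι → E) (D : Submodule ℝ (ι → ℝ))
    (hF : ∀ μ ∈ D, ∑ i, max (μ i) 0 • v i = 0)
    {lam0 : ι → ℝ} (hmem : lam0 ∈ D) {i0 : ι} (h0 : lam0 i0 ≠ 0) :
    ∑ i, wcl D lam0 i0 i • v i = 0 := by
  have : ∑ i, wcl D lam0 i0 i • v i = ∑ i, (if i ∈ Tcl D lam0 i0 then |lam0 i| • v i else 0) := by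
    apply Finset.sum_congr rfl
    intro i _
    unfold wcl
    split_ifs
    · rfl
    · rw [zero_smul]
  rw [this, Finset.sum_ite_mem, Finset.univ_inter]
  exact class_sum v D hF hmem h0

/-- the conclusion predicate for the key lemma -/
def GoodFamily (v : ι → E) (D : Submodule ℝ (ι → ℝ)) (P : Finset (ι → ℝ)) : Prop :=
  (∀ w ∈ P, ∀ i, 0 ≤ w i) ∧
  (∀ w ∈ P, ∑ i, w i • v i = 0) ∧
  (∀ w ∈ P, w ≠ 0) ∧
  (∀ w ∈ P, ∀ w' ∈ P, w ≠ w' → ∀ i, w i = 0 ∨ w' i = 0) ∧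
  (∀ w ∈ P, ∀ i, w i ≠ 0 → ∃ μ ∈ D, μ i ≠ 0)

theorem key_lemma (v : ι → E) (k : ℕ) :
    ∀ (D : Submodule ℝ (ι → ℝ)),
      (∀ μ ∈ D, ∑ i, μ i = 0) →
      (∀ μ ∈ D, ∑ i, max (μ i) 0 • v i = 0) →
      finrank ℝ ↥D = k → 1 ≤ k →
      ∃ P : Finset (ι → ℝ), k + 1 ≤ P.card ∧ GoodFamily v D P := by
  induction k using Nat.strong_induction_on with
  | _ k IH =>
  intro D hσ hF hrank hk
  -- a nonzero element of D
  have hDne : D ≠ ⊥ := by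
    intro h
    rw [h, finrank_bot] at hrank
    omega
  obtain ⟨lam0, hlam0D, hlam0⟩ := Submodule.exists_mem_ne_zero_of_ne_bot hDne
  -- the functionals φ i on D
  set φ : ι → Module.Dual ℝ ↥D :=
    fun i => (lam0 i)⁻¹ • ((LinearMap.proj (R := ℝ) (φ := fun _ : ι => ℝ) i).comp D.subtype)
    with hφ
  have hφapp : ∀ (i : ι) (μ : ↥D), φ i μ = (μ : ι → ℝ) i / lam0 i := by
    intro i μ
    simp [hφ, LinearMap.proj, div_eq_inv_mul, mul_comm]
  set sup0 : Set ι := {i | lam0 i ≠ 0} with hsup0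
  set W : Submodule ℝ (Module.Dual ℝ ↥D) := Submodule.span ℝ (φ '' sup0) with hW
  -- the subspace of D vanishing on the support of lam0
  set Kz : Submodule ℝ (ι → ℝ) :=
    { carrier := {μ | ∀ i, lam0 i ≠ 0 → μ i = 0}
      add_mem' := by intro a b ha hb i hi; simp [ha i hi, hb i hi]
      zero_mem' := by intro i _; rfl
      smul_mem' := by intro c a ha i hi; simp [ha i hi] } with hKz
  have hKzmem : ∀ μ : ι → ℝ, μ ∈ Kz ↔ ∀ i, lam0 i ≠ 0 → μ i = 0 := fun μ => Iff.rfl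
  set E0 : Submodule ℝ (ι → ℝ) := D ⊓ Kz with hE0
  have hE0le : E0 ≤ D := inf_le_left
  -- coannihilator computation
  have hco : W.dualCoannihilator = E0.comap D.subtype := by
    ext μ
    rw [Submodule.mem_dualCoannihilator, Submodule.mem_comap]
    constructor
    · intro h
      refine ⟨μ.2, ?_⟩
      intro i hi
      have hmem : φ i ∈ W := Submodule.subset_span ⟨i, hi, rfl⟩
      have := h (φ i) hmem
      rw [hφapp] at this
      rcases div_eq_zero_iff.mp this with h' | h'
      · exact h'
      · exact absurd h' hi
    · intro h f hf
      induction hf using Submodule.span_induction with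
      | mem x hx =>
        obtain ⟨i, hi, rfl⟩ := hx
        rw [hφapp, show (μ : ι → ℝ) i = 0 from h.2 i hi, zero_div]
      | zero => rfl
      | add x y _ _ hx hy => rw [LinearMap.add_apply, hx, hy, add_zero]
      | smul c x _ hx => rw [LinearMap.smul_apply, hx, smul_zero]
  have hrankW : finrank ℝ ↥W + finrank ℝ ↥E0 = k := by
    have h1 := Subspace.finrank_add_finrank_dualCoannihilator_eq W
    rw [hco] at h1
    have h2 : finrank ℝ ↥(E0.comap D.subtype) = finrank ℝ ↥E0 :=
      (Submodule.comapSubtypeEquivOfLe hE0le).finrank_eq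
    rw [h2] at h1
    rw [h1, hrank]
  set k0 := finrank ℝ ↥E0 with hk0
  -- independent spanning subset of the functionals
  obtain ⟨b, hbsub, hbspan, hbind⟩ := exists_linearIndependent ℝ (φ '' sup0)
  have hbfin : b.Finite := Set.Finite.subset (Set.toFinite _) hbsub
  haveI hbfty : Fintype ↥b := hbfin.fintype
  set bF : Finset (Module.Dual ℝ ↥D) := b.toFinset with hbF
  have hbFcard : bF.card = finrank ℝ ↥W := by
    have h1 : finrank ℝ ↥(Submodule.span ℝ b) = b.toFinset.card := finrank_span_set_eq_card hbind
    rw [hbspan, ← hW] at h1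
    rw [hbF, h1]
  -- pick representatives
  have hpickex : ∀ g : Module.Dual ℝ ↥D, ∃ i : ι, g ∈ bF → (lam0 i ≠ 0 ∧ φ i = g) := by
    intro g
    by_cases hg : g ∈ bF
    · have hgb : g ∈ φ '' sup0 := hbsub (Set.mem_toFinset.mp hg)
      obtain ⟨i, hi, hig⟩ := hgb
      exact ⟨i, fun _ => ⟨hi, hig⟩⟩
    · obtain ⟨i, _⟩ := Function.ne_iff.mp hlam0
      exact ⟨i, fun h => absurd h hg⟩
  choose pick hpick using hpickex
  have hpick0 : ∀ g ∈ bF, lam0 (pick g) ≠ 0 := fun g hg => (hpick g hg).1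
  have hpickφ : ∀ g ∈ bF, φ (pick g) = g := fun g hg => (hpick g hg).2
  -- φ is determined by common class membership
  have hφeq : ∀ i i' : ι, lam0 i ≠ 0 → lam0 i' ≠ 0 →
      (∀ μ ∈ D, μ i * lam0 i' = μ i' * lam0 i) → φ i = φ i' := by
    intro i i' hi hi' hrel
    apply LinearMap.ext
    intro μ
    rw [hφapp, hφapp, div_eq_div_iff hi hi']
    exact hrel (μ : ι → ℝ) μ.2
  have hdisjcl : ∀ g ∈ bF, ∀ g' ∈ bF, g ≠ g' → ∀ i,
      wcl D lam0 (pick g) i = 0 ∨ wcl D lam0 (pick g') i = 0 := by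
    intro g hg g' hg' hne i
    by_contra hcon
    push_neg at hcon
    obtain ⟨h1, h2⟩ := hcon
    have m1 := wcl_ne_zero_iff.mp h1
    have m2 := wcl_ne_zero_iff.mp h2
    apply hne
    rw [← hpickφ g hg, ← hpickφ g' hg']
    exact hφeq _ _ (hpick0 g hg) (hpick0 g' hg') (class_trans m1 m2)
  have hwclne : ∀ g ∈ bF, wcl D lam0 (pick g) ≠ 0 := by
    intro g hg hzero
    have hx : wcl D lam0 (pick g) (pick g) ≠ 0 :=
      wcl_ne_zero_iff.mpr (self_mem_Tcl (hpick0 g hg))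
    rw [hzero] at hx
    exact hx rfl
  have hwclinj : ∀ s : Finset (Module.Dual ℝ ↥D), s ⊆ bF →
      Set.InjOn (fun g => wcl D lam0 (pick g)) ↑s := by
    intro s hs g hg g' hg' heq
    by_contra hne
    have hd := hdisjcl g (hs hg) g' (hs hg') hne (pick g)
    have hx : wcl D lam0 (pick g) (pick g) ≠ 0 :=
      wcl_ne_zero_iff.mpr (self_mem_Tcl (hpick0 g (hs hg)))
    rcases hd with h | h
    · exact hx h
    · apply hx
      have : wcl D lam0 (pick g) = wcl D lam0 (pick g') := heq
      rw [this]
      exact h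
  -- class parts over any subset of bF form a good family
  have hP1good : ∀ s : Finset (Module.Dual ℝ ↥D), s ⊆ bF →
      GoodFamily v D (s.image (fun g => wcl D lam0 (pick g))) := by
    intro s hs
    refine ⟨?_, ?_, ?_, ?_, ?_⟩
    · intro w hw i
      obtain ⟨g, hg, rfl⟩ := Finset.mem_image.mp hw
      exact wcl_nonneg D lam0 (pick g) i
    · intro w hw
      obtain ⟨g, hg, rfl⟩ := Finset.mem_image.mp hw
      exact wcl_sum v D hF hlam0D (hpick0 g (hs hg))
    · intro w hw
      obtain ⟨g, hg, rfl⟩ := Finset.mem_image.mp hw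
      exact hwclne g (hs hg)
    · intro w hw w' hw' hne i
      obtain ⟨g, hg, rfl⟩ := Finset.mem_image.mp hw
      obtain ⟨g', hg', rfl⟩ := Finset.mem_image.mp hw'
      exact hdisjcl g (hs hg) g' (hs hg') (fun h => hne (by rw [h])) i
    · intro w hw i hwi
      obtain ⟨g, hg, rfl⟩ := Finset.mem_image.mp hw
      have := (mem_Tcl.mp (wcl_ne_zero_iff.mp hwi)).1
      exact ⟨lam0, hlam0D, this⟩
  rcases Nat.eq_zero_or_pos k0 with hk00 | hk0pos
  · -- Case A : the functionals span the whole dual space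
    have hWtop : W = ⊤ := by
      apply Submodule.eq_top_of_finrank_eq
      rw [Subspace.dual_finrank_eq]
      omega
    have hspanb : Submodule.span ℝ b = ⊤ := by
      rw [hbspan, ← hW, hWtop]
    let B : Basis ↥b ℝ (Module.Dual ℝ ↥D) :=
      Basis.mk hbind (by rw [Subtype.range_coe, hspanb])
    have hbFne : bF.Nonempty := by
      rw [← Finset.card_pos, hbFcard]
      omega
    obtain ⟨g1, hg1⟩ := hbFne
    have hg1b : g1 ∈ b := Set.mem_toFinset.mp hg1
    set μd : ↥D := (Module.evalEquiv ℝ ↥D).symm (B.coord ⟨g1, hg1b⟩) with hμd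
    have hμdapp : ∀ g (hg : g ∈ b), g μd = if (⟨g, hg⟩ : ↥b) = ⟨g1, hg1b⟩ then 1 else 0 := by
      intro g hg
      have h1 : g μd = (B.coord ⟨g1, hg1b⟩) g := by
        rw [hμd, Module.apply_evalEquiv_symm_apply]
      rw [h1]
      have h2 : g = B ⟨g, hg⟩ := by rw [Basis.mk_apply]
      conv_lhs => rw [h2]
      rw [Basis.coord_apply, Basis.repr_self_apply]
    have hμdg1 : g1 μd = 1 := by rw [hμdapp g1 hg1b, if_pos rfl]
    have hμdzero : ∀ g ∈ bF, g ≠ g1 → g μd = 0 := by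
      intro g hg hne
      rw [hμdapp g (Set.mem_toFinset.mp hg),
        if_neg (fun h => hne (congrArg Subtype.val h))]
    have hμdne : (μd : ι → ℝ) ≠ 0 := by
      intro h
      have h0 : μd = 0 := Subtype.ext h
      rw [h0, map_zero] at hμdg1
      exact zero_ne_one hμdg1
    have hμdsum : ∑ i, (μd : ι → ℝ) i = 0 := hσ _ μd.2
    have hclz : ∀ g ∈ bF, g ≠ g1 → ∀ i ∈ Tcl D lam0 (pick g), (μd : ι → ℝ) i = 0 := by
      intro g hg hne i hi
      obtain ⟨hi0, hrel⟩ := mem_Tcl.mp hi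
      have he := hrel (μd : ι → ℝ) μd.2
      have hval : (μd : ι → ℝ) (pick g) = 0 := by
        have h := hμdzero g hg hne
        rw [← hpickφ g hg, hφapp] at h
        rcases div_eq_zero_iff.mp h with h' | h'
        · exact h'
        · exact absurd h' (hpick0 g hg)
      rw [hval, zero_mul] at he
      rcases mul_eq_zero.mp he.symm with h' | h'
      · exact h'
      · exact absurd h' (hpick0 g hg)
    set μplus : ι → ℝ := fun i => max ((μd : ι → ℝ) i) 0 with hμplus
    set μminus : ι → ℝ := fun i => max (-((μd : ι → ℝ) i)) 0 with hμminus
    have hμplusne : μplus ≠ 0 := by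
      obtain ⟨i, hi⟩ := exists_pos_coord hμdsum hμdne
      intro h
      have h2 : 0 < μplus i := lt_max_iff.mpr (Or.inl hi)
      rw [h] at h2
      exact lt_irrefl 0 (by simpa using h2)
    have hμdsum' : ∑ i, (-((μd : ι → ℝ) i)) = 0 := by
      have hn : ∑ i, (-((μd : ι → ℝ) i)) = -∑ i, (μd : ι → ℝ) i := by
        exact Finset.sum_neg_distrib _
      rw [hn, hμdsum, neg_zero]
    have hμdne' : (fun i => -((μd : ι → ℝ) i)) ≠ 0 := by
      intro h
      apply hμdne
      funext i
      have := congrFun h i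
      simpa using neg_eq_zero.mp this
    have hμminusne : μminus ≠ 0 := by
      obtain ⟨i, hi⟩ := exists_pos_coord hμdsum' hμdne'
      intro h
      have h2 : 0 < μminus i := lt_max_iff.mpr (Or.inl hi)
      rw [h] at h2
      exact lt_irrefl 0 (by simpa using h2)
    have hpm : ∀ i, μplus i = 0 ∨ μminus i = 0 := by
      intro i
      rcases le_or_gt ((μd : ι → ℝ) i) 0 with h | h
      · exact Or.inl (max_eq_right h)
      · exact Or.inr (max_eq_right (by simp only [neg_nonpos]; exact h.le))
    set Pcl : Finset (ι → ℝ) := (bF.erase g1).image (fun g => wcl D lam0 (pick g)) with hPcl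
    have hPclgood : GoodFamily v D Pcl := hP1good (bF.erase g1) (Finset.erase_subset g1 bF)
    have hclpm : ∀ g ∈ bF.erase g1, ∀ i, wcl D lam0 (pick g) i ≠ 0 →
        μplus i = 0 ∧ μminus i = 0 := by
      intro g hg i hwi
      have hi := wcl_ne_zero_iff.mp hwi
      have h0 := hclz g (Finset.mem_of_mem_erase hg) (Finset.ne_of_mem_erase hg) i hi
      constructor
      · rw [hμplus]
        simp [h0]
      · rw [hμminus]
        simp [h0]
    have hPclcard : Pcl.card = k - 1 := by
      rw [hPcl, Finset.card_image_of_injOn (hwclinj _ (Finset.erase_subset g1 bF)),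
        Finset.card_erase_of_mem hg1, hbFcard]
      omega
    have hmnotin : μminus ∉ Pcl := by
      intro h
      obtain ⟨g, hg, heq⟩ := Finset.mem_image.mp h
      have hx : wcl D lam0 (pick g) (pick g) ≠ 0 :=
        wcl_ne_zero_iff.mpr (self_mem_Tcl (hpick0 g (Finset.mem_of_mem_erase hg)))
      apply hx
      have h0 := (hclpm g hg (pick g) hx).2
      rw [heq]
      exact h0
    have hpnotin : μplus ∉ insert μminus Pcl := by
      intro h
      rcases Finset.mem_insert.mp h with h | h
      · obtain ⟨i, hi⟩ := Function.ne_iff.mp hμplusne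
        rcases hpm i with h' | h'
        · exact hi h'
        · rw [h] at hi
          exact hi h'
      · obtain ⟨g, hg, heq⟩ := Finset.mem_image.mp h
        have hx : wcl D lam0 (pick g) (pick g) ≠ 0 :=
          wcl_ne_zero_iff.mpr (self_mem_Tcl (hpick0 g (Finset.mem_of_mem_erase hg)))
        apply hx
        have h0 := (hclpm g hg (pick g) hx).1
        rw [heq]
        exact h0
    have hsumplus : ∑ i, μplus i • v i = 0 := by
      rw [hμplus]
      exact hF _ μd.2
    have hsumminus : ∑ i, μminus i • v i = 0 := by
      rw [hμminus]
      have := hF (-(μd : ι → ℝ)) (D.neg_mem μd.2)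
      simpa using this
    have hsuppplus : ∀ i, μplus i ≠ 0 → (μd : ι → ℝ) i ≠ 0 := by
      intro i hi hz
      apply hi
      rw [hμplus]
      simp [hz]
    have hsuppminus : ∀ i, μminus i ≠ 0 → (μd : ι → ℝ) i ≠ 0 := by
      intro i hi hz
      apply hi
      rw [hμminus]
      simp [hz]
    refine ⟨insert μplus (insert μminus Pcl), ?_, ?_, ?_, ?_, ?_, ?_⟩
    · rw [Finset.card_insert_of_notMem hpnotin, Finset.card_insert_of_notMem hmnotin,
        hPclcard]
      omega
    · intro w hw
      rcases Finset.mem_insert.mp hw with rfl | hw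
      · intro i
        exact le_max_right _ _
      rcases Finset.mem_insert.mp hw with rfl | hw
      · intro i
        exact le_max_right _ _
      · exact hPclgood.1 w hw
    · intro w hw
      rcases Finset.mem_insert.mp hw with rfl | hw
      · exact hsumplus
      rcases Finset.mem_insert.mp hw with rfl | hw
      · exact hsumminus
      · exact hPclgood.2.1 w hw
    · intro w hw
      rcases Finset.mem_insert.mp hw with rfl | hw
      · exact hμplusne
      rcases Finset.mem_insert.mp hw with rfl | hw
      · exact hμminusne
      · exact hPclgood.2.2.1 w hw
    · intro w hw w' hw' hne i
      rcases Finset.mem_insert.mp hw with rfl | hw <;>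
        rcases Finset.mem_insert.mp hw' with rfl | hw'
      · exact absurd rfl hne
      · rcases Finset.mem_insert.mp hw' with rfl | hw'
        · exact hpm i
        · obtain ⟨g, hg, heq⟩ := Finset.mem_image.mp hw'
          by_cases hz : w' i = 0
          · exact Or.inr hz
          · rw [← heq] at hz
            exact Or.inl (hclpm g hg i hz).1
      · rcases Finset.mem_insert.mp hw with rfl | hw
        · exact (hpm i).symm.imp id id |>.symm.elim (fun h => Or.inr h) (fun h => Or.inl h)
        · obtain ⟨g, hg, heq⟩ := Finset.mem_image.mp hw
          by_cases hz : w i = 0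
          · exact Or.inl hz
          · rw [← heq] at hz
            exact Or.inr (hclpm g hg i hz).1
      · rcases Finset.mem_insert.mp hw with rfl | hw <;>
          rcases Finset.mem_insert.mp hw' with rfl | hw'
        · exact absurd rfl hne
        · obtain ⟨g, hg, heq⟩ := Finset.mem_image.mp hw'
          by_cases hz : w' i = 0
          · exact Or.inr hz
          · rw [← heq] at hz
            exact Or.inl (hclpm g hg i hz).2
        · obtain ⟨g, hg, heq⟩ := Finset.mem_image.mp hw
          by_cases hz : w i = 0
          · exact Or.inl hz
          · rw [← heq] at hz
            exact Or.inr (hclpm g hg i hz).2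
        · exact hPclgood.2.2.2.1 w hw w' hw' hne i
    · intro w hw i hwi
      rcases Finset.mem_insert.mp hw with rfl | hw
      · exact ⟨(μd : ι → ℝ), μd.2, hsuppplus i hwi⟩
      rcases Finset.mem_insert.mp hw with rfl | hw
      · exact ⟨(μd : ι → ℝ), μd.2, hsuppminus i hwi⟩
      · exact hPclgood.2.2.2.2 w hw i hwi
  · -- Case B : recurse on E0
    have hlam0notE0 : lam0 ∉ E0 := by
      intro h
      apply hlam0
      funext i
      by_cases hi : lam0 i = 0
      · exact hi
      · exact absurd (h.2 i hi) hi
    have hE0lt : E0 < D := lt_of_le_of_ne hE0le (by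
      intro h
      exact hlam0notE0 (by rw [h]; exact hlam0D))
    have hk0lt : k0 < k := by
      rw [← hrank]
      exact Submodule.finrank_lt_finrank_of_lt hE0lt
    obtain ⟨P2, hP2card, hP2good⟩ := IH k0 hk0lt E0
      (fun μ hμ => hσ μ (hE0le hμ)) (fun μ hμ => hF μ (hE0le hμ)) hk0.symm hk0pos
    set P1 : Finset (ι → ℝ) := bF.image (fun g => wcl D lam0 (pick g)) with hP1
    have hP1card : P1.card = k - k0 := by
      rw [hP1, Finset.card_image_of_injOn (hwclinj bF (le_refl bF)), hbFcard]
      omega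
    have hsup1 : ∀ w ∈ P1, ∀ i, w i ≠ 0 → lam0 i ≠ 0 := by
      intro w hw i hwi
      obtain ⟨g, hg, rfl⟩ := Finset.mem_image.mp hw
      exact (mem_Tcl.mp (wcl_ne_zero_iff.mp hwi)).1
    have hsup2 : ∀ w ∈ P2, ∀ i, w i ≠ 0 → lam0 i = 0 := by
      intro w hw i hwi
      obtain ⟨μ, hμ, hμi⟩ := hP2good.2.2.2.2 w hw i hwi
      by_contra hcon
      exact hμi (hμ.2 i hcon)
    have hdisj12 : Disjoint P1 P2 := by
      rw [Finset.disjoint_left]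
      intro w hw1 hw2
      have hne : w ≠ 0 := hP1good bF (le_refl bF) |>.2.2.1 w hw1
      obtain ⟨i, hi⟩ := Function.ne_iff.mp hne
      exact hsup1 w hw1 i hi (hsup2 w hw2 i hi)
    refine ⟨P1 ∪ P2, ?_, ?_, ?_, ?_, ?_, ?_⟩
    · rw [Finset.card_union_of_disjoint hdisj12, hP1card]
      omega
    · intro w hw
      rcases Finset.mem_union.mp hw with h | h
      · exact hP1good bF (le_refl bF) |>.1 w h
      · exact hP2good.1 w h
    · intro w hw
      rcases Finset.mem_union.mp hw with h | h
      · exact hP1good bF (le_refl bF) |>.2.1 w h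
      · exact hP2good.2.1 w h
    · intro w hw
      rcases Finset.mem_union.mp hw with h | h
      · exact hP1good bF (le_refl bF) |>.2.2.1 w h
      · exact hP2good.2.2.1 w h
    · intro w hw w' hw' hne i
      rcases Finset.mem_union.mp hw with h | h <;> rcases Finset.mem_union.mp hw' with h' | h'
      · exact hP1good bF (le_refl bF) |>.2.2.2.1 w h w' h' hne i
      · by_cases hz : w i = 0
        · exact Or.inl hz
        · exact Or.inr (by by_contra hz'; exact hsup1 w h i hz (hsup2 w' h' i hz'))
      · by_cases hz : w' i = 0
        · exact Or.inr hz
        · exact Or.inl (by by_contra hz'; exact hsup1 w' h' i hz (hsup2 w h i hz'))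
      · exact hP2good.2.2.2.1 w h w' h' hne i
    · intro w hw i hwi
      rcases Finset.mem_union.mp hw with h | h
      · exact hP1good bF (le_refl bF) |>.2.2.2.2 w h i hwi
      · obtain ⟨μ, hμ, hμi⟩ := hP2good.2.2.2.2 w h i hwi
        exact ⟨μ, hE0le hμ, hμi⟩

lemma covdim_subsingleton {Y : Type*} [MetricSpace Y] (hdim : CovDimLE Y 0)
    {s : Set Y} (hs : IsPreconnected s) : s.Subsingleton := by
  intro a ha b hb
  by_contra hne
  set r := dist a b with hr
  have hrpos : 0 < r := dist_pos.mpr hne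
  set U1 : Set Y := {y | dist y a < r/2} with hU1
  set U2 : Set Y := {y | r/4 < dist y a} with hU2
  have hU1open : IsOpen U1 := isOpen_lt (by continuity) continuous_const
  have hU2open : IsOpen U2 := isOpen_lt continuous_const (by continuity)
  obtain ⟨V, hVopen, hVcover, hVref, hVdisj⟩ := hdim {U1, U2}
    (by
      intro U hU
      rcases Finset.mem_insert.mp hU with rfl | hU
      · exact hU1open
      · rw [Finset.mem_singleton] at hU
        subst hU
        exact hU2open)
    (by
      ext y
      simp only [Finset.coe_insert, Finset.coe_singleton, Set.sUnion_insert,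
        Set.sUnion_singleton, Set.mem_union, Set.mem_univ, iff_true]
      rcases lt_or_ge (dist y a) (r/2) with h | h
      · exact Or.inl h
      · exact Or.inr (by rw [hU2]; simp only [Set.mem_setOf_eq]; linarith))
  have haU : a ∈ ⋃₀ (V : Set (Set Y)) := by rw [hVcover]; trivial
  obtain ⟨Va, hVa, haVa⟩ := haU
  have hVamem : Va ∈ V := Finset.mem_coe.mp hVa
  have hVasub : Va ⊆ U1 := by
    obtain ⟨U, hU, hsub⟩ := hVref Va hVamem
    rcases Finset.mem_insert.mp hU with rfl | hU
    · exact hsub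
    · rw [Finset.mem_singleton] at hU
      subst hU
      exfalso
      have h2 := hsub haVa
      rw [hU2] at h2
      simp only [Set.mem_setOf_eq, dist_self] at h2
      linarith
  have hclosed : IsClosed Va := by
    have hcompl : Vaᶜ = ⋃₀ ((V.erase Va : Finset (Set Y)) : Set (Set Y)) := by
      ext y
      constructor
      · intro hy
        have hyU : y ∈ ⋃₀ (V : Set (Set Y)) := by rw [hVcover]; trivial
        obtain ⟨W', hW', hyW'⟩ := hyU
        refine ⟨W', Finset.mem_coe.mpr (Finset.mem_erase.mpr ⟨?_, Finset.mem_coe.mp hW'⟩), hyW'⟩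
        intro hEq
        subst hEq
        exact hy hyW'
      · rintro ⟨W', hW', hyW'⟩ hyVa
        have hWV := Finset.mem_erase.mp (Finset.mem_coe.mp hW')
        have hcard : 2 ≤ ({W', Va} : Finset (Set Y)).card := by
          rw [Finset.card_insert_of_notMem (by simp [hWV.1]), Finset.card_singleton]
        have hsubV : ({W', Va} : Finset (Set Y)) ⊆ V := by
          intro x hx
          rcases Finset.mem_insert.mp hx with rfl | hx
          · exact hWV.2
          · rw [Finset.mem_singleton] at hx
            subst hx
            exact hVamem
        have hint := hVdisj {W', Va} hsubV (by omega)
        have hymem : y ∈ ⋂₀ (({W', Va} : Finset (Set Y)) : Set (Set Y)) := by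
          intro T hT
          rcases Finset.mem_insert.mp (Finset.mem_coe.mp hT) with rfl | hT
          · exact hyW'
          · rw [Finset.mem_singleton] at hT
            subst hT
            exact hyVa
        rw [hint] at hymem
        exact hymem
    rw [← isOpen_compl_iff, hcompl]
    exact isOpen_sUnion (fun W' hW' =>
      hVopen W' (Finset.mem_of_mem_erase (Finset.mem_coe.mp hW')))
  have hclopen : IsClopen Va := ⟨hclosed, hVopen Va hVamem⟩
  have hsubVa := hs.subset_isClopen hclopen ⟨a, ha, haVa⟩
  have hbVa := hVasub (hsubVa hb)
  rw [hU1] at hbVa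
  simp only [Set.mem_setOf_eq] at hbVa
  rw [dist_comm] at hbVa
  rw [← hr] at hbVa
  linarith

lemma mem_tverSet_of_weights {d r : ℕ} (hr : 0 < r) (S : Finset (Fin d → ℝ)) (p : Fin d → ℝ)
    (w : Fin r → {x // x ∈ S} → ℝ)
    (h0 : ∀ j i, 0 ≤ w j i)
    (h1 : ∀ j, ∑ i, w j i • (i.val - p) = 0)
    (h2 : ∀ j, w j ≠ 0)
    (h3 : ∀ j j', j ≠ j' → ∀ i, w j i = 0 ∨ w j' i = 0) :
    p ∈ TverSet r S := by
  classical
  set j0 : Fin r := ⟨0, hr⟩ with hj0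
  set f : {x // x ∈ S} → Fin r :=
    fun i => if h : ∃ j, w j i ≠ 0 then h.choose else j0 with hf
  have hfspec : ∀ j i, w j i ≠ 0 → f i = j := by
    intro j i hji
    have hex : ∃ j, w j i ≠ 0 := ⟨j, hji⟩
    rw [hf]
    simp only [dif_pos hex]
    by_contra hne
    rcases h3 _ _ hne i with h | h
    · exact hex.choose_spec h
    · exact hji h
  set A : Fin r → Finset (Fin d → ℝ) :=
    fun j => (Finset.univ.filter (fun i => f i = j)).image Subtype.val with hA
  refine ⟨A, ?_, ?_, ?_⟩
  · intro j j' hne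
    rw [Finset.disjoint_left]
    intro x hx hx'
    obtain ⟨i1, hi1, hxi1⟩ := Finset.mem_image.mp hx
    obtain ⟨i2, hi2, hxi2⟩ := Finset.mem_image.mp hx'
    have : i1 = i2 := Subtype.ext (hxi1.trans hxi2.symm)
    subst this
    exact hne ((Finset.mem_filter.mp hi1).2.symm.trans (Finset.mem_filter.mp hi2).2)
  · ext x
    constructor
    · intro hx
      obtain ⟨T, ⟨j, rfl⟩, hj⟩ := hx
      obtain ⟨i, _, hxi⟩ := Finset.mem_image.mp (Finset.mem_coe.mp hj)
      rw [← hxi]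
      exact Finset.mem_coe.mpr i.2
    · intro hx
      have hxS : x ∈ S := Finset.mem_coe.mp hx
      refine Set.mem_iUnion.mpr ⟨f ⟨x, hxS⟩, Finset.mem_coe.mpr ?_⟩
      apply Finset.mem_image.mpr
      exact ⟨⟨x, hxS⟩, Finset.mem_filter.mpr ⟨Finset.mem_univ _, rfl⟩, rfl⟩
  · intro j
    set t : Finset {x // x ∈ S} := Finset.univ.filter (fun i => f i = j) with ht
    -- weights vanish off t
    have hofft : ∀ i, i ∉ t → w j i = 0 := by
      intro i hi
      by_contra hcon
      exact hi (Finset.mem_filter.mpr ⟨Finset.mem_univ _, hfspec j i hcon⟩)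
    -- positive total weight
    obtain ⟨i0, hi0⟩ := Function.ne_iff.mp (h2 j)
    have hi0t : i0 ∈ t := Finset.mem_filter.mpr ⟨Finset.mem_univ _, hfspec j i0 hi0⟩
    have hwpos : 0 < ∑ i ∈ t, w j i := by
      have h1' : 0 < w j i0 := lt_of_le_of_ne (h0 j i0) (Ne.symm hi0)
      exact lt_of_lt_of_le h1' (Finset.single_le_sum (fun i _ => h0 j i) hi0t)
    -- the center of mass is p
    have hsum0 : ∑ i ∈ t, w j i • (i.val - p) = 0 := by
      rw [← h1 j]
      apply Finset.sum_subset (Finset.subset_univ t)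
      intro i _ hi
      rw [hofft i hi, zero_smul]
    have hcm : t.centerMass (w j) Subtype.val = p := by
      rw [Finset.centerMass]
      have hsplit : ∑ i ∈ t, w j i • i.val
          = (∑ i ∈ t, w j i) • p := by
        have e1 : ∑ i ∈ t, w j i • (i.val - p)
            = (∑ i ∈ t, w j i • i.val) - (∑ i ∈ t, w j i) • p := by
          rw [Finset.sum_smul, ← Finset.sum_sub_distrib]
          apply Finset.sum_congr rfl
          intro i _
          rw [smul_sub]
        rw [e1] at hsum0
        have := sub_eq_zero.mp hsum0
        exact this
      rw [hsplit, smul_smul, inv_mul_cancel₀ (ne_of_gt hwpos), one_smul]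
    rw [← hcm]
    apply Finset.centerMass_mem_convexHull t (fun i _ => h0 j i) hwpos
    intro i hi
    rw [hA]
    apply Finset.mem_coe.mpr
    exact Finset.mem_image_of_mem Subtype.val hi

lemma fin_family_of_finset (v : ι → E) (P : Finset (ι → ℝ)) (r : ℕ) (hr : 1 ≤ r)
    (hcard : r ≤ P.card)
    (hg0 : ∀ w ∈ P, ∀ i, 0 ≤ w i)
    (hg1 : ∀ w ∈ P, ∑ i, w i • v i = 0)
    (hg2 : ∀ w ∈ P, w ≠ 0)
    (hg3 : ∀ w ∈ P, ∀ w' ∈ P, w ≠ w' → ∀ i, w i = 0 ∨ w' i = 0) :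
    ∃ w : Fin r → ι → ℝ, (∀ j i, 0 ≤ w j i) ∧ (∀ j, ∑ i, w j i • v i = 0) ∧
      (∀ j, w j ≠ 0) ∧ (∀ j j', j ≠ j' → ∀ i, w j i = 0 ∨ w j' i = 0) := by
  classical
  obtain ⟨Q, hQP, hQcard⟩ := Finset.exists_subset_card_eq (s := P) (n := r - 1) (by omega)
  set R : Finset (ι → ℝ) := P \ Q with hR
  have hRne : R.Nonempty := by
    rw [← Finset.card_pos, hR, Finset.card_sdiff_of_subset hQP, hQcard]
    omega
  have hRP : R ⊆ P := Finset.sdiff_subset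
  have hRQ : ∀ u ∈ R, u ∉ Q := fun u hu => (Finset.mem_sdiff.mp hu).2
  set wlast : ι → ℝ := fun i => ∑ u ∈ R, u i with hwlast
  set w : Fin r → ι → ℝ := fun j =>
    if h : (j : ℕ) < r - 1 then (Q.equivFin.symm ⟨(j : ℕ), by rw [hQcard]; exact h⟩ : ι → ℝ)
    else wlast with hw
  have hwQ : ∀ (j : Fin r) (h : (j : ℕ) < r - 1),
      w j = (Q.equivFin.symm ⟨(j : ℕ), by rw [hQcard]; exact h⟩ : ι → ℝ) ∧ w j ∈ Q := by
    intro j h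
    constructor
    · rw [hw]; simp only [dif_pos h]
    · rw [hw]; simp only [dif_pos h]
      exact (Q.equivFin.symm _).2
  have hwlastP : ∀ (j : Fin r), ¬ ((j : ℕ) < r - 1) → w j = wlast := by
    intro j h
    rw [hw]; simp only [dif_neg h]
  -- disjointness of Q-elements and wlast supports
  have hQlast : ∀ q ∈ Q, ∀ i, q i = 0 ∨ wlast i = 0 := by
    intro q hq i
    by_cases hz : q i = 0
    · exact Or.inl hz
    · refine Or.inr ?_
      rw [hwlast]
      apply Finset.sum_eq_zero
      intro u hu
      have hne : q ≠ u := by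
        intro h
        exact hRQ u hu (h ▸ hq)
      rcases hg3 q (hQP hq) u (hRP hu) hne i with h | h
      · exact absurd h hz
      · exact h
  have hwlast_nonneg : ∀ i, 0 ≤ wlast i := by
    intro i
    rw [hwlast]
    exact Finset.sum_nonneg (fun u hu => hg0 u (hRP hu) i)
  have hwlast_ne : wlast ≠ 0 := by
    obtain ⟨u0, hu0⟩ := hRne
    obtain ⟨i, hi⟩ := Function.ne_iff.mp (hg2 u0 (hRP hu0))
    have hpos : 0 < u0 i := lt_of_le_of_ne (hg0 u0 (hRP hu0) i) (Ne.symm hi)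
    have : 0 < wlast i := by
      rw [hwlast]
      exact lt_of_lt_of_le hpos
        (Finset.single_le_sum (fun u hu => hg0 u (hRP hu) i) hu0)
    intro h
    rw [h] at this
    simp at this
  have hwlast_sum : ∑ i, wlast i • v i = 0 := by
    rw [hwlast]
    have : ∑ i, (∑ u ∈ R, u i) • v i = ∑ u ∈ R, ∑ i, u i • v i := by
      rw [Finset.sum_comm]
      apply Finset.sum_congr rfl
      intro i _
      rw [Finset.sum_smul]
    rw [this]
    exact Finset.sum_eq_zero (fun u hu => hg1 u (hRP hu))
  refine ⟨w, ?_, ?_, ?_, ?_⟩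
  · intro j i
    by_cases h : (j : ℕ) < r - 1
    · exact hg0 _ (hQP (hwQ j h).2) i
    · rw [hwlastP j h]
      exact hwlast_nonneg i
  · intro j
    by_cases h : (j : ℕ) < r - 1
    · exact hg1 _ (hQP (hwQ j h).2)
    · rw [hwlastP j h]
      exact hwlast_sum
  · intro j
    by_cases h : (j : ℕ) < r - 1
    · exact hg2 _ (hQP (hwQ j h).2)
    · rw [hwlastP j h]
      exact hwlast_ne
  · intro j j' hne i
    by_cases h : (j : ℕ) < r - 1 <;> by_cases h' : (j' : ℕ) < r - 1
    · -- both in Q, distinct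
      have hnefun : w j ≠ w j' := by
        rw [(hwQ j h).1, (hwQ j' h').1]
        intro hEq
        apply hne
        have h1 := Subtype.ext hEq
        have h2 := Q.equivFin.symm.injective h1
        have h3 := congrArg Fin.val h2
        exact Fin.ext h3
      exact hg3 _ (hQP (hwQ j h).2) _ (hQP (hwQ j' h').2) hnefun i
    · rw [hwlastP j' h']
      exact hQlast _ (hwQ j h).2 i
    · rw [hwlastP j h]
      rcases hQlast _ (hwQ j' h').2 i with hq | hl
      · exact Or.inr hq
      · exact Or.inl hl
    · exfalso
      apply hne
      apply Fin.ext
      omega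

theorem tverberg_partition_from_zero_dim_radon
    (d t : ℕ) (hd : 0 < d) (S : Finset (Fin d → ℝ))
    (hcard : S.card = d + t + 2) (hdim : CovDimLE ↥(TverSet 2 S) 0) :
    (TverSet (2 + t) S).Nonempty := by
  classical
  have hcardι : Fintype.card {x // x ∈ S} = d + t + 2 := by
    rw [Fintype.card_coe, hcard]
  -- the space of affine dependencies
  set Φ : ({x // x ∈ S} → ℝ) →ₗ[ℝ] ((Fin d → ℝ) × ℝ) :=
    { toFun := fun lam => (∑ i, lam i • i.val, ∑ i, lam i)
      map_add' := by
        intro a b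
        simp only [Pi.add_apply, add_smul, Finset.sum_add_distrib, Prod.mk_add_mk]
      map_smul' := by
        intro c a
        simp only [Pi.smul_apply, smul_eq_mul, RingHom.id_apply, Prod.smul_mk]
        refine Prod.ext ?_ ?_
        · simp only [Finset.smul_sum, mul_smul]
        · simp only [Finset.mul_sum, smul_eq_mul] } with hΦ
  set D := LinearMap.ker Φ with hD
  have hmemD : ∀ μ, μ ∈ D ↔ ((∑ i, μ i • i.val) = 0 ∧ (∑ i, μ i) = 0) := by
    intro μ
    rw [hD, LinearMap.mem_ker]
    constructor
    · intro h
      exact ⟨congrArg Prod.fst h, congrArg Prod.snd h⟩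
    · intro h
      exact Prod.ext h.1 h.2
  have hσD : ∀ μ ∈ D, ∑ i, μ i = 0 := fun μ hμ => ((hmemD μ).mp hμ).2
  have hxD : ∀ μ ∈ D, ∑ i, μ i • i.val = 0 := fun μ hμ => ((hmemD μ).mp hμ).1
  -- dimension bound
  have hrk : t + 1 ≤ finrank ℝ ↥D := by
    have h1 := LinearMap.finrank_range_add_finrank_ker Φ
    rw [← hD] at h1
    have h2 : finrank ℝ ({x // x ∈ S} → ℝ) = d + t + 2 := by
      rw [Module.finrank_pi, hcardι]
    have h4 : finrank ℝ ((Fin d → ℝ) × ℝ) = d + 1 := by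
      rw [Module.finrank_prod, Module.finrank_pi, Module.finrank_self, Fintype.card_fin]
    have h3 : finrank ℝ ↥(LinearMap.range Φ) ≤ d + 1 := by
      have h5 := Submodule.finrank_le (LinearMap.range Φ)
      omega
    omega
  -- positive part sums are positive on nonzero dependencies
  have hpos : ∀ μ : {x // x ∈ S} → ℝ, μ ∈ D → μ ≠ 0 → 0 < ∑ i, max (μ i) 0 := by
    intro μ hμ hne
    obtain ⟨i0, hi0⟩ := exists_pos_coord (hσD μ hμ) hne
    have h1 : 0 < max (μ i0) 0 := lt_max_iff.mpr (Or.inl hi0)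
    exact lt_of_lt_of_le h1 (Finset.single_le_sum (f := fun i => max (μ i) 0)
      (fun i _ => le_max_right _ _) (Finset.mem_univ i0))
  -- the Radon point map
  set q : ({x // x ∈ S} → ℝ) → (Fin d → ℝ) :=
    fun μ => (∑ i, max (μ i) 0)⁻¹ • ∑ i, max (μ i) 0 • i.val with hq
  have hminus_eq : ∀ x : ℝ, max (-x) 0 = max x 0 - x := by
    intro x
    rcases le_total x 0 with h | h
    · rw [max_eq_left (neg_nonneg.mpr h), max_eq_right h]
      ring
    · rw [max_eq_right (neg_nonpos.mpr h), max_eq_left h]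
      ring
  have hsub : ∀ (w : {x // x ∈ S} → ℝ) (p : Fin d → ℝ), (∑ i, w i • (i.val - p))
      = (∑ i, w i • i.val) - (∑ i, w i) • p := by
    intro w p
    rw [Finset.sum_smul, ← Finset.sum_sub_distrib]
    apply Finset.sum_congr rfl
    intro i _
    rw [smul_sub]
  have hqzero : ∀ μ ∈ D, μ ≠ 0 → ∑ i, max (μ i) 0 • (i.val - q μ) = 0 := by
    intro μ hμ hne
    rw [hsub]
    have hd0 : (∑ i, max (μ i) 0) ≠ 0 := ne_of_gt (hpos μ hμ hne)
    rw [hq]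
    simp only []
    rw [smul_smul, mul_inv_cancel₀ hd0, one_smul, sub_self]
  have hqneg : ∀ μ ∈ D, μ ≠ 0 → ∑ i, max (-(μ i)) 0 • (i.val - q μ) = 0 := by
    intro μ hμ hne
    have hterm : ∀ i : {x // x ∈ S}, max (-(μ i)) 0 • (i.val - q μ)
        = max (μ i) 0 • (i.val - q μ) - μ i • (i.val - q μ) := by
      intro i
      rw [hminus_eq, sub_smul]
    rw [Finset.sum_congr rfl (fun i _ => hterm i), Finset.sum_sub_distrib,
      hqzero μ hμ hne, hsub, hxD μ hμ, hσD μ hμ, zero_smul, sub_zero, sub_zero]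
  -- nonvanishing of positive and negative parts
  have hplusne : ∀ μ ∈ D, μ ≠ 0 → (fun i => max (μ i) 0) ≠ 0 := by
    intro μ hμ hne h
    obtain ⟨i0, hi0⟩ := exists_pos_coord (hσD μ hμ) hne
    have h2 : 0 < max (μ i0) 0 := lt_max_iff.mpr (Or.inl hi0)
    have h3 := congrFun h i0
    rw [h3] at h2
    exact lt_irrefl 0 h2
  have hnegD : ∀ μ : {x // x ∈ S} → ℝ, μ ∈ D → -μ ∈ D := fun μ hμ => D.neg_mem hμ
  have hminusne : ∀ μ ∈ D, μ ≠ 0 → (fun i => max (-(μ i)) 0) ≠ 0 := by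
    intro μ hμ hne h
    have hne' : -μ ≠ 0 := fun h' => hne (by simpa using congrArg Neg.neg h')
    obtain ⟨i0, hi0⟩ := exists_pos_coord (hσD (-μ) (hnegD μ hμ)) hne'
    have h2 : 0 < max (-(μ i0)) 0 := lt_max_iff.mpr (Or.inl hi0)
    have h3 := congrFun h i0
    rw [h3] at h2
    exact lt_irrefl 0 h2
  -- membership in the Radon set
  have hq2 : ∀ μ ∈ D, μ ≠ 0 → q μ ∈ TverSet 2 S := by
    intro μ hμ hne
    apply mem_tverSet_of_weights (by norm_num) S (q μ)
      (fun j => if j = 0 then (fun i => max (μ i) 0) else (fun i => max (-(μ i)) 0))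
    · intro j i
      split_ifs <;> exact le_max_right _ _
    · intro j
      split_ifs
      · exact hqzero μ hμ hne
      · exact hqneg μ hμ hne
    · intro j
      split_ifs
      · exact hplusne μ hμ hne
      · exact hminusne μ hμ hne
    · intro j j' hnejj i
      by_cases h1 : j = 0 <;> by_cases h2 : j' = 0
      · exact absurd (h1.trans h2.symm) hnejj
      · simp only [if_pos h1, if_neg h2]
        rcases le_or_gt (μ i) 0 with h | h
        · exact Or.inl (max_eq_right h)
        · exact Or.inr (max_eq_right (by linarith))
      · simp only [if_neg h1, if_pos h2]
        rcases le_or_gt (μ i) 0 with h | h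
        · exact Or.inr (max_eq_right h)
        · exact Or.inl (max_eq_right (by linarith))
      · exfalso
        apply hnejj
        apply Fin.ext
        omega
  -- a nonzero dependency
  have hDbot : D ≠ ⊥ := by
    intro h
    rw [h, finrank_bot] at hrk
    omega
  obtain ⟨lam0, hlam0D, hlam0⟩ := Submodule.exists_mem_ne_zero_of_ne_bot hDbot
  -- find a point p and a (t+1)-dimensional subspace of dependencies with Radon point p
  have hmain : ∃ (p : Fin d → ℝ) (D' : Submodule ℝ ({x // x ∈ S} → ℝ)), D' ≤ D ∧
      finrank ℝ ↥D' = t + 1 ∧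
      (∀ μ ∈ D', ∑ i, max (μ i) 0 • (i.val - p) = 0) := by
    rcases Nat.eq_zero_or_pos t with rfl | ht
    · -- t = 0 : Radon's theorem, no topology needed
      refine ⟨q lam0, Submodule.span ℝ {lam0}, ?_, ?_, ?_⟩
      · rw [Submodule.span_le, Set.singleton_subset_iff]
        exact hlam0D
      · exact finrank_span_singleton hlam0
      · intro μ hμ
        obtain ⟨c, rfl⟩ := Submodule.mem_span_singleton.mp hμ
        rcases lt_trichotomy c 0 with hc | hc | hc
        · have hcoef : ∀ i : {x // x ∈ S}, max ((c • lam0) i) 0 = (-c) * max (-(lam0 i)) 0 := by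
            intro i
            rw [mul_max_of_nonneg _ _ (by linarith : (0:ℝ) ≤ -c)]
            simp only [Pi.smul_apply, smul_eq_mul, mul_zero]
            ring_nf
          calc ∑ i, max ((c • lam0) i) 0 • (i.val - q lam0)
              = ∑ i, ((-c) * max (-(lam0 i)) 0) • (i.val - q lam0) := by
                exact Finset.sum_congr rfl (fun i _ => by rw [hcoef i])
            _ = (-c) • ∑ i, max (-(lam0 i)) 0 • (i.val - q lam0) := by
                rw [Finset.smul_sum]
                exact Finset.sum_congr rfl (fun i _ => by rw [smul_smul])
            _ = 0 := by rw [hqneg lam0 hlam0D hlam0, smul_zero]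
        · subst hc
          simp
        · have hcoef : ∀ i : {x // x ∈ S}, max ((c • lam0) i) 0 = c * max (lam0 i) 0 := by
            intro i
            rw [mul_max_of_nonneg _ _ hc.le]
            simp only [Pi.smul_apply, smul_eq_mul, mul_zero]
          calc ∑ i, max ((c • lam0) i) 0 • (i.val - q lam0)
              = ∑ i, (c * max (lam0 i) 0) • (i.val - q lam0) := by
                exact Finset.sum_congr rfl (fun i _ => by rw [hcoef i])
            _ = c • ∑ i, max (lam0 i) 0 • (i.val - q lam0) := by
                rw [Finset.smul_sum]
                exact Finset.sum_congr rfl (fun i _ => by rw [smul_smul])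
            _ = 0 := by rw [hqzero lam0 hlam0D hlam0, smul_zero]
    · -- t ≥ 1 : use the covering dimension hypothesis
      have hrk2 : 2 ≤ finrank ℝ ↥D := by omega
      have hconn : IsConnected ({0}ᶜ : Set ↥D) := by
        apply isConnected_compl_singleton_of_one_lt_rank
        rw [← Module.finrank_eq_rank]
        exact_mod_cast hrk2
      have hc1 : Continuous (fun lam : ↥D => ∑ i, max ((lam : {x // x ∈ S} → ℝ) i) 0) := by
        apply continuous_finset_sum
        intro i _
        exact ((continuous_apply i).comp continuous_subtype_val).max continuous_const
      have hc2 : Continuous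
          (fun lam : ↥D => ∑ i, max ((lam : {x // x ∈ S} → ℝ) i) 0 • i.val) := by
        apply continuous_finset_sum
        intro i _
        exact (((continuous_apply i).comp continuous_subtype_val).max continuous_const).smul
          continuous_const
      have hne_of_mem : ∀ lam : ({0}ᶜ : Set ↥D), ((lam : ↥D) : {x // x ∈ S} → ℝ) ≠ 0 := by
        intro lam h
        exact (Set.mem_compl_singleton_iff.mp lam.2) (Subtype.ext h)
      set Qm : ({0}ᶜ : Set ↥D) → ↥(TverSet 2 S) := fun lam =>
        ⟨q ((lam : ↥D) : {x // x ∈ S} → ℝ),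
          hq2 _ (lam : ↥D).2 (hne_of_mem lam)⟩ with hQm
      have hQmcont : Continuous Qm := by
        apply Continuous.subtype_mk
        have hden : ∀ lam : ({0}ᶜ : Set ↥D),
            (∑ i, max (((lam : ↥D) : {x // x ∈ S} → ℝ) i) 0) ≠ 0 := by
          intro lam
          exact ne_of_gt (hpos _ (lam : ↥D).2 (hne_of_mem lam))
        exact ((hc1.comp continuous_subtype_val).inv₀ hden).smul
          (hc2.comp continuous_subtype_val)
      haveI : PreconnectedSpace ({0}ᶜ : Set ↥D) :=
        Subtype.preconnectedSpace hconn.isPreconnected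
      have himg := covdim_subsingleton hdim (isPreconnected_range hQmcont)
      set p := q lam0 with hp
      have hqconst : ∀ μ ∈ D, μ ≠ 0 → q μ = p := by
        intro μ hμ hne
        have hm1 : (⟨μ, hμ⟩ : ↥D) ∈ ({0}ᶜ : Set ↥D) :=
          Set.mem_compl_singleton_iff.mpr (fun h => hne (congrArg Subtype.val h))
        have hm2 : (⟨lam0, hlam0D⟩ : ↥D) ∈ ({0}ᶜ : Set ↥D) :=
          Set.mem_compl_singleton_iff.mpr (fun h => hlam0 (congrArg Subtype.val h))
        have heq := himg (Set.mem_range_self (⟨⟨μ, hμ⟩, hm1⟩ : ({0}ᶜ : Set ↥D)))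
          (Set.mem_range_self (⟨⟨lam0, hlam0D⟩, hm2⟩ : ({0}ᶜ : Set ↥D)))
        have := congrArg Subtype.val heq
        exact this
      -- a subspace of dimension exactly t+1
      have hle' : t + 1 ≤ finrank ℝ ↥D := hrk
      set Bd := Module.finBasis ℝ ↥D with hBd
      set vecs : Fin (t+1) → ({x // x ∈ S} → ℝ) :=
        fun j => (Bd (Fin.castLE hle' j)).val with hvecs
      have hvecsD : ∀ j, vecs j ∈ D := fun j => (Bd (Fin.castLE hle' j)).2
      have hvind : LinearIndependent ℝ vecs := by
        have h1 : LinearIndependent ℝ (fun j : Fin (t+1) => Bd (Fin.castLE hle' j)) :=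
          Bd.linearIndependent.comp _ (Fin.castLE_injective _)
        exact h1.map' D.subtype (Submodule.ker_subtype D)
      set D' := Submodule.span ℝ (Set.range vecs) with hD'
      have hD'le : D' ≤ D := by
        rw [hD', Submodule.span_le]
        rintro x ⟨j, rfl⟩
        exact hvecsD j
      refine ⟨p, D', hD'le, ?_, ?_⟩
      · rw [hD', finrank_span_eq_card hvind, Fintype.card_fin]
      · intro μ hμ'
        by_cases hne : μ = 0
        · subst hne
          simp
        · rw [← hqconst μ (hD'le hμ') hne]
          exact hqzero μ (hD'le hμ') hne
  obtain ⟨p, D', hD'le, hD'rank, hHF⟩ := hmain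
  obtain ⟨P, hPcard, hPgood⟩ := key_lemma (fun i : {x // x ∈ S} => i.val - p) (t+1) D'
    (fun μ hμ => hσD μ (hD'le hμ)) hHF hD'rank (by omega)
  obtain ⟨w, hw0, hw1, hw2, hw3⟩ := fin_family_of_finset (fun i : {x // x ∈ S} => i.val - p)
    P (2+t) (by omega) (by omega) hPgood.1 hPgood.2.1 hPgood.2.2.1 hPgood.2.2.2.1
  exact ⟨p, mem_tverSet_of_weights (by omega) S p w hw0 hw1 hw2 hw3⟩
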